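/- For a prime p > 3 with p ≡ 2 (mod 3), in the nil clean divisor graph of ℤ/(3p) the vertices 1 and 2 are not adjacent and have no common neighbor, and hence the diameter of the graph is exactly 3. -/
import Mathlib


def IsNilCleanElem {R : Type*} [CommRing R] (x : R) : Prop :=
  ∃ e n : R, IsIdempotentElem e ∧ IsNilpotent n ∧ x = e + n

def NCVertex {R : Type*} [CommRing R] (x : R) : Prop :=
  x ≠ 0 ∧ ∃ y : R, y ≠ 0 ∧ y ≠ x ∧ IsNilCleanElem (x * y)

def NCAdj {R : Type*} [CommRing R] (x y : R) : Prop :=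
  x ≠ y ∧ NCVertex x ∧ NCVertex y ∧ IsNilCleanElem (x * y)

private lemma aux_zmod3_sq : ∀ a : ZMod 3, a ≠ 0 → a * a = 1 := by decide

private lemma aux_zmod3_two : ¬((1 + 1 : ZMod 3) = 0 ∨ (1 + 1 : ZMod 3) = 1) := by decide

private lemma aux_zmod3_two' :
    ¬((1 : ZMod 3) * (1 + 1) = 0 ∨ (1 : ZMod 3) * (1 + 1) = 1) := by decide

private lemma aux_field_idem {F : Type*} [Field F] {a : F} (h : a * a = a) :
    a = 0 ∨ a = 1 := by
  rcases mul_eq_zero.mp (show a * (a - 1) = 0 by rw [mul_sub, mul_one, h, sub_self]) with h' | h'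
  exacts [Or.inl h', Or.inr (sub_eq_zero.mp h')]

private lemma aux_nc_iff {p : ℕ} [Fact p.Prime] (e : ZMod (3 * p) ≃+* ZMod 3 × ZMod p)
    (x : ZMod (3 * p)) :
    IsNilCleanElem x ↔ ((e x).1 = 0 ∨ (e x).1 = 1) ∧ ((e x).2 = 0 ∨ (e x).2 = 1) := by
  haveI : Fact (Nat.Prime 3) := Nat.fact_prime_three
  constructor
  · rintro ⟨i, n, hi, hn, rfl⟩
    have hn0 : n = 0 := by
      have h2 : IsNilpotent (e n) := hn.map (e : ZMod (3 * p) →+* ZMod 3 × ZMod p)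
      exact e.injective (by rw [h2.eq_zero, map_zero])
    subst hn0
    rw [add_zero]
    have hmap : e i * e i = e i := by rw [← map_mul, hi]
    constructor
    · have h1 : (e i).1 * (e i).1 = (e i).1 := by
        have := congrArg Prod.fst hmap; rwa [Prod.fst_mul] at this
      exact aux_field_idem h1
    · have h2 : (e i).2 * (e i).2 = (e i).2 := by
        have := congrArg Prod.snd hmap; rwa [Prod.snd_mul] at this
      exact aux_field_idem h2
  · rintro ⟨h1, h2⟩
    refine ⟨x, 0, ?_, IsNilpotent.zero, (add_zero x).symm⟩
    have : e (x * x) = e x := by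
      rw [map_mul]
      refine Prod.ext ?_ ?_
      · rw [Prod.fst_mul]; rcases h1 with h | h <;> rw [h] <;> ring
      · rw [Prod.snd_mul]; rcases h2 with h | h <;> rw [h] <;> ring
    exact e.injective this

private lemma aux_nz2 {p : ℕ} [Fact p.Prime] (e : ZMod (3 * p) ≃+* ZMod 3 × ZMod p)
    {x : ZMod (3 * p)} (h : (e x).2 ≠ 0) : x ≠ 0 :=
  fun h0 => h (by rw [h0, map_zero]; rfl)

private lemma aux_nz1 {p : ℕ} [Fact p.Prime] (e : ZMod (3 * p) ≃+* ZMod 3 × ZMod p)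
    {x : ZMod (3 * p)} (h : (e x).1 ≠ 0) : x ≠ 0 :=
  fun h0 => h (by rw [h0, map_zero]; rfl)

private lemma aux_ne1 {p : ℕ} [Fact p.Prime] (e : ZMod (3 * p) ≃+* ZMod 3 × ZMod p)
    {x y : ZMod (3 * p)} (h : (e x).1 ≠ (e y).1) : x ≠ y :=
  fun hxy => h (by rw [hxy])

private lemma aux_ne2 {p : ℕ} [Fact p.Prime] (e : ZMod (3 * p) ≃+* ZMod 3 × ZMod p)
    {x y : ZMod (3 * p)} (h : (e x).2 ≠ (e y).2) : x ≠ y :=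
  fun hxy => h (by rw [hxy])

private lemma aux_vertex {p : ℕ} [Fact p.Prime] (e : ZMod (3 * p) ≃+* ZMod 3 × ZMod p)
    (x : ZMod (3 * p)) (hx : x ≠ 0) : NCVertex x := by
  haveI : Fact (Nat.Prime 3) := Nat.fact_prime_three
  set y := e.symm (if (e x).1 = 0 then 1 else 0, if (e x).2 = 0 then 1 else (e x).2⁻¹) with hy
  have hey : e y = (if (e x).1 = 0 then 1 else 0, if (e x).2 = 0 then 1 else (e x).2⁻¹) :=
    e.apply_symm_apply _
  have hey1 : (e y).1 = if (e x).1 = 0 then 1 else 0 := by rw [hey]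
  have hey2 : (e y).2 = if (e x).2 = 0 then 1 else (e x).2⁻¹ := by rw [hey]
  refine ⟨hx, y, ?_, ?_, ?_⟩
  · refine aux_nz2 e ?_
    rw [hey2]
    split_ifs with hc
    · exact one_ne_zero
    · exact inv_ne_zero hc
  · refine aux_ne1 e ?_
    rw [hey1]
    split_ifs with hc
    · rw [hc]; exact one_ne_zero
    · exact fun h => hc h.symm
  · refine (aux_nc_iff e _).mpr ?_
    rw [map_mul, Prod.fst_mul, Prod.snd_mul, hey1, hey2]
    constructor
    · split_ifs with hc
      · left; rw [hc, zero_mul]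
      · left; rw [mul_zero]
    · split_ifs with hc
      · left; rw [hc, zero_mul]
      · right; exact mul_inv_cancel₀ hc

private lemma aux_adj {p : ℕ} [Fact p.Prime] (e : ZMod (3 * p) ≃+* ZMod 3 × ZMod p)
    (x y : ZMod (3 * p)) (hx : x ≠ 0) (hy : y ≠ 0) (hxy : x ≠ y)
    (h1 : (e x).1 * (e y).1 = 0 ∨ (e x).1 * (e y).1 = 1)
    (h2 : (e x).2 * (e y).2 = 0 ∨ (e x).2 * (e y).2 = 1) : NCAdj x y :=
  ⟨hxy, aux_vertex e x hx, aux_vertex e y hy, (aux_nc_iff e _).mpr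
    (by rw [map_mul, Prod.fst_mul, Prod.snd_mul]; exact ⟨h1, h2⟩)⟩

private lemma aux_flip {R : Type*} [CommRing R] {x y : R}
    (h : NCAdj y x ∨ (∃ a, NCAdj y a ∧ NCAdj a x) ∨
      (∃ a b, NCAdj y a ∧ NCAdj a b ∧ NCAdj b x)) :
    NCAdj x y ∨ (∃ a, NCAdj x a ∧ NCAdj a y) ∨
      (∃ a b, NCAdj x a ∧ NCAdj a b ∧ NCAdj b y) := by
  have s : ∀ u v : R, NCAdj u v → NCAdj v u := by
    rintro u v ⟨h1, h2, h3, h4⟩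
    exact ⟨Ne.symm h1, h3, h2, by rwa [mul_comm]⟩
  rcases h with h | ⟨a, h1, h2⟩ | ⟨a, b, h1, h2, h3⟩
  · exact Or.inl (s _ _ h)
  · exact Or.inr (Or.inl ⟨a, s _ _ h2, s _ _ h1⟩)
  · exact Or.inr (Or.inr ⟨b, a, s _ _ h3, s _ _ h2, s _ _ h1⟩)

private lemma aux_caseA {p : ℕ} [Fact p.Prime] (e : ZMod (3 * p) ≃+* ZMod 3 × ZMod p)
    (x y : ZMod (3 * p)) (hx : x ≠ 0) (hy : y ≠ 0) (hxy : x ≠ y)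
    (hx1 : (e x).1 = 0) :
    NCAdj x y ∨ (∃ a, NCAdj x a ∧ NCAdj a y) ∨
      (∃ a b, NCAdj x a ∧ NCAdj a b ∧ NCAdj b y) := by
  by_cases hy2 : (e y).2 = 0
  · exact Or.inl (aux_adj e x y hx hy hxy (Or.inl (by rw [hx1, zero_mul]))
      (Or.inl (by rw [hy2, mul_zero])))
  by_cases hy1 : (e y).1 = 0
  · -- both "T-type": go through e.symm (1, 0)
    set a := e.symm (1, 0) with ha
    have hea1 : (e a).1 = 1 := by rw [ha, e.apply_symm_apply]
    have hea2 : (e a).2 = 0 := by rw [ha, e.apply_symm_apply]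
    have ha0 : a ≠ 0 := aux_nz1 e (by rw [hea1]; exact one_ne_zero)
    have k1 : NCAdj x a := by
      refine aux_adj e x a hx ha0 (aux_ne1 e ?_) ?_ ?_
      · rw [hx1, hea1]; exact fun h => one_ne_zero h.symm
      · left; rw [hx1, zero_mul]
      · left; rw [hea2, mul_zero]
    have k2 : NCAdj a y := by
      refine aux_adj e a y ha0 hy (aux_ne1 e ?_) ?_ ?_
      · rw [hea1, hy1]; exact one_ne_zero
      · left; rw [hy1, mul_zero]
      · left; rw [hea2, zero_mul]
    exact Or.inr (Or.inl ⟨a, k1, k2⟩)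
  · -- y is a unit mod p and mod 3: go through e.symm ((e y).1, 0)
    have h3 := aux_zmod3_sq
    set b := e.symm ((e y).1, 0) with hb
    have heb1 : (e b).1 = (e y).1 := by rw [hb, e.apply_symm_apply]
    have heb2 : (e b).2 = 0 := by rw [hb, e.apply_symm_apply]
    have hb0 : b ≠ 0 := aux_nz1 e (by rw [heb1]; exact hy1)
    have k1 : NCAdj x b := by
      refine aux_adj e x b hx hb0 (aux_ne1 e ?_) ?_ ?_
      · rw [hx1, heb1]; exact fun h => hy1 h.symm
      · left; rw [hx1, zero_mul]
      · left; rw [heb2, mul_zero]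
    have k2 : NCAdj b y := by
      refine aux_adj e b y hb0 hy (aux_ne2 e ?_) ?_ ?_
      · rw [heb2]; exact fun h => hy2 h.symm
      · right; rw [heb1]; exact h3 _ hy1
      · left; rw [heb2, zero_mul]
    exact Or.inr (Or.inl ⟨b, k1, k2⟩)

private lemma aux_casePU {p : ℕ} [Fact p.Prime] (e : ZMod (3 * p) ≃+* ZMod 3 × ZMod p)
    (x y : ZMod (3 * p)) (hx : x ≠ 0) (hy : y ≠ 0)
    (hx2 : (e x).2 = 0) (hy1 : (e y).1 ≠ 0) (hy2 : (e y).2 ≠ 0) :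
    NCAdj x y ∨ (∃ a, NCAdj x a ∧ NCAdj a y) ∨
      (∃ a b, NCAdj x a ∧ NCAdj a b ∧ NCAdj b y) := by
  set a := e.symm (0, (e y).2⁻¹) with ha
  have hea1 : (e a).1 = 0 := by rw [ha, e.apply_symm_apply]
  have hea2 : (e a).2 = (e y).2⁻¹ := by rw [ha, e.apply_symm_apply]
  have ha0 : a ≠ 0 := aux_nz2 e (by rw [hea2]; exact inv_ne_zero hy2)
  have hxa : x ≠ a := by
    intro h
    apply hx
    apply e.injective
    rw [map_zero]
    refine Prod.ext ?_ ?_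
    · rw [h, hea1]; rfl
    · rw [hx2]; rfl
  have k1 : NCAdj x a := by
    refine aux_adj e x a hx ha0 hxa ?_ ?_
    · left; rw [hea1, mul_zero]
    · left; rw [hx2, zero_mul]
  have k2 : NCAdj a y := by
    refine aux_adj e a y ha0 hy (aux_ne1 e ?_) ?_ ?_
    · rw [hea1]; exact fun h => hy1 h.symm
    · left; rw [hea1, zero_mul]
    · right; rw [hea2]; exact inv_mul_cancel₀ hy2
  exact Or.inr (Or.inl ⟨a, k1, k2⟩)

private lemma aux_main {p : ℕ} [Fact p.Prime] (e : ZMod (3 * p) ≃+* ZMod 3 × ZMod p)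
    (x y : ZMod (3 * p)) (hx : x ≠ 0) (hy : y ≠ 0) (hxy : x ≠ y) :
    NCAdj x y ∨ (∃ a, NCAdj x a ∧ NCAdj a y) ∨
      (∃ a b, NCAdj x a ∧ NCAdj a b ∧ NCAdj b y) := by
  haveI : Fact (Nat.Prime 3) := Nat.fact_prime_three
  by_cases hx1 : (e x).1 = 0
  · exact aux_caseA e x y hx hy hxy hx1
  by_cases hy1 : (e y).1 = 0
  · exact aux_flip (aux_caseA e y x hy hx hxy.symm hy1)
  by_cases hx2 : (e x).2 = 0
  · by_cases hy2 : (e y).2 = 0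
    · -- both "P-type": go through e.symm (0, 1)
      set a := e.symm (0, 1) with ha
      have hea1 : (e a).1 = 0 := by rw [ha, e.apply_symm_apply]
      have hea2 : (e a).2 = 1 := by rw [ha, e.apply_symm_apply]
      have ha0 : a ≠ 0 := aux_nz2 e (by rw [hea2]; exact one_ne_zero)
      have k1 : NCAdj x a := by
        refine aux_adj e x a hx ha0 (aux_ne1 e ?_) ?_ ?_
        · rw [hea1]; exact hx1
        · left; rw [hea1, mul_zero]
        · left; rw [hx2, zero_mul]
      have k2 : NCAdj a y := by
        refine aux_adj e a y ha0 hy (aux_ne1 e ?_) ?_ ?_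
        · rw [hea1]; exact fun h => hy1 h.symm
        · left; rw [hea1, zero_mul]
        · left; rw [hy2, mul_zero]
      exact Or.inr (Or.inl ⟨a, k1, k2⟩)
    · exact aux_casePU e x y hx hy hx2 hy1 hy2
  · by_cases hy2 : (e y).2 = 0
    · exact aux_flip (aux_casePU e y x hy hx hy2 hx1 hx2)
    · -- both units: path of length 3
      have h3 := aux_zmod3_sq
      set a := e.symm (0, (e x).2⁻¹) with ha
      set b := e.symm ((e y).1, 0) with hb
      have hea1 : (e a).1 = 0 := by rw [ha, e.apply_symm_apply]
      have hea2 : (e a).2 = (e x).2⁻¹ := by rw [ha, e.apply_symm_apply]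
      have heb1 : (e b).1 = (e y).1 := by rw [hb, e.apply_symm_apply]
      have heb2 : (e b).2 = 0 := by rw [hb, e.apply_symm_apply]
      have ha0 : a ≠ 0 := aux_nz2 e (by rw [hea2]; exact inv_ne_zero hx2)
      have hb0 : b ≠ 0 := aux_nz1 e (by rw [heb1]; exact hy1)
      have k1 : NCAdj x a := by
        refine aux_adj e x a hx ha0 (aux_ne1 e ?_) ?_ ?_
        · rw [hea1]; exact hx1
        · left; rw [hea1, mul_zero]
        · right; rw [hea2]; exact mul_inv_cancel₀ hx2
      have k2 : NCAdj a b := by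
        refine aux_adj e a b ha0 hb0 (aux_ne1 e ?_) ?_ ?_
        · rw [hea1, heb1]; exact fun h => hy1 h.symm
        · left; rw [hea1, zero_mul]
        · left; rw [heb2, mul_zero]
      have k3 : NCAdj b y := by
        refine aux_adj e b y hb0 hy (aux_ne2 e ?_) ?_ ?_
        · rw [heb2]; exact fun h => hy2 h.symm
        · right; rw [heb1]; exact h3 _ hy1
        · left; rw [heb2, zero_mul]
      exact Or.inr (Or.inr ⟨a, b, k1, k2, k3⟩)

theorem stmt18 (p : ℕ) (hp : p.Prime) (hp3 : 3 < p) (hmod : p % 3 = 2) :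
    NCVertex (1 : ZMod (3 * p)) ∧ NCVertex (2 : ZMod (3 * p)) ∧
    ¬ NCAdj (1 : ZMod (3 * p)) 2 ∧
    (¬ ∃ a : ZMod (3 * p), NCAdj 1 a ∧ NCAdj a 2) ∧
    (∀ x y : ZMod (3 * p), NCVertex x → NCVertex y → x ≠ y →
      (NCAdj x y ∨ (∃ a, NCAdj x a ∧ NCAdj a y) ∨
        (∃ a b, NCAdj x a ∧ NCAdj a b ∧ NCAdj b y))) := by
  haveI : Fact p.Prime := ⟨hp⟩
  haveI : Fact (Nat.Prime 3) := Nat.fact_prime_three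
  haveI : Fact (1 < 3 * p) := ⟨by omega⟩
  have hcop : Nat.Coprime 3 p := (Nat.coprime_primes (by norm_num) hp).2 (by omega)
  set e := ZMod.chineseRemainder hcop with hedef
  have h2nz : (2 : ZMod (3 * p)) ≠ 0 := by
    intro h
    have h2 : ((2 : ℕ) : ZMod (3 * p)) = 0 := by push_cast; exact h
    rw [ZMod.natCast_eq_zero_iff] at h2
    have := Nat.le_of_dvd (by norm_num) h2
    omega
  have he2 : e (2 : ZMod (3 * p)) = (1 + 1, 1 + 1) := by
    rw [show (2 : ZMod (3 * p)) = 1 + 1 by norm_num, map_add, map_one]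
    rfl
  have h2p : ((1 : ZMod p) + 1) ≠ 0 := by
    intro h
    have h2 : ((2 : ℕ) : ZMod p) = 0 := by push_cast; linear_combination h
    rw [ZMod.natCast_eq_zero_iff] at h2
    have := Nat.le_of_dvd (by norm_num) h2
    omega
  have h2p1 : ((1 : ZMod p) + 1) ≠ 1 := by
    intro h
    exact one_ne_zero (add_left_cancel (show (1 : ZMod p) + 1 = 1 + 0 by rw [h, add_zero]))
  refine ⟨aux_vertex e 1 one_ne_zero, aux_vertex e 2 h2nz, ?_, ?_, ?_⟩
  · rintro ⟨-, -, -, hnc⟩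
    rw [one_mul, aux_nc_iff e] at hnc
    obtain ⟨h1, -⟩ := hnc
    rw [he2] at h1
    exact aux_zmod3_two h1
  · rintro ⟨a, ⟨-, -, ⟨ha0, -⟩, hnc1⟩, ⟨-, -, -, hnc2⟩⟩
    rw [one_mul, aux_nc_iff e] at hnc1
    rw [aux_nc_iff e, map_mul, he2] at hnc2
    obtain ⟨ha1, ha2⟩ := hnc1
    obtain ⟨hb1, hb2⟩ := hnc2
    rw [Prod.fst_mul] at hb1
    rw [Prod.snd_mul] at hb2
    have ha1' : (e a).1 = 0 := by
      rcases ha1 with h | h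
      · exact h
      · exfalso; rw [h] at hb1; exact aux_zmod3_two' hb1
    have ha2' : (e a).2 = 0 := by
      rcases ha2 with h | h
      · exact h
      · exfalso
        rw [h, one_mul] at hb2
        rcases hb2 with h' | h'
        · exact h2p h'
        · exact h2p1 h'
    exact ha0 (e.injective (by rw [map_zero]; exact Prod.ext ha1' ha2'))
  · intro x y hvx hvy hxy
    exact aux_main e x y hvx.1 hvy.1 hxy
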